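/- Let k₁, k₂, k₃ ∈ ℕ and define w : ℝ³ → ℝ by w(x) = cos(2πk₁x₁/l₁)·cos(2πk₂x₂/l₂)·cos(πk₃(x₃+l₃⁻)/l₃), and the vector fields E := (0, ∂₃w, −∂₂w) and H := (iωμ)⁻¹·(−∂₂²w − ∂₃²w, ∂₁∂₂w, ∂₁∂₃w). If ω² = (4π²/(εμ))·(k₁²/l₁² + k₂²/l₂² + k₃²/(4l₃²)), then curl H(x) = −iωε·E(x) for every x ∈ ℝ³. -/

import Mathlib

open Real Complex Filter Topology

/-- Partial derivative in the first coordinate. -/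
noncomputable def pd1 {F : Type*} [NormedAddCommGroup F] [NormedSpace ℝ F]
    (f : ℝ × ℝ × ℝ → F) (x : ℝ × ℝ × ℝ) : F :=
  deriv (fun t => f (t, x.2.1, x.2.2)) x.1

/-- Partial derivative in the second coordinate. -/
noncomputable def pd2 {F : Type*} [NormedAddCommGroup F] [NormedSpace ℝ F]
    (f : ℝ × ℝ × ℝ → F) (x : ℝ × ℝ × ℝ) : F :=
  deriv (fun t => f (x.1, t, x.2.2)) x.2.1

/-- Partial derivative in the third coordinate. -/
noncomputable def pd3 {F : Type*} [NormedAddCommGroup F] [NormedSpace ℝ F]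
    (f : ℝ × ℝ × ℝ → F) (x : ℝ × ℝ × ℝ) : F :=
  deriv (fun t => f (x.1, x.2.1, t)) x.2.2

/-- Curl of a complex vector field on ℝ³. -/
noncomputable def curl3 (F : ℝ × ℝ × ℝ → ℂ × ℂ × ℂ) (x : ℝ × ℝ × ℝ) : ℂ × ℂ × ℂ :=
  (pd2 (fun y => (F y).2.2) x - pd3 (fun y => (F y).2.1) x,
   pd3 (fun y => (F y).1) x - pd1 (fun y => (F y).2.2) x,
   pd1 (fun y => (F y).2.1) x - pd2 (fun y => (F y).1) x)

/-- Divergence of a complex vector field on ℝ³. -/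
noncomputable def div3 (F : ℝ × ℝ × ℝ → ℂ × ℂ × ℂ) (x : ℝ × ℝ × ℝ) : ℂ :=
  pd1 (fun y => (F y).1) x + pd2 (fun y => (F y).2.1) x + pd3 (fun y => (F y).2.2) x

/-- Laplacian of a scalar function on ℝ³. -/
noncomputable def lap {F : Type*} [NormedAddCommGroup F] [NormedSpace ℝ F]
    (f : ℝ × ℝ × ℝ → F) (x : ℝ × ℝ × ℝ) : F :=
  pd1 (pd1 f) x + pd2 (pd2 f) x + pd3 (pd3 f) x

/-- Gradient of a complex scalar function on ℝ³. -/
noncomputable def grad3 (f : ℝ × ℝ × ℝ → ℂ) (x : ℝ × ℝ × ℝ) : ℂ × ℂ × ℂ :=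
  (pd1 f x, pd2 f x, pd3 f x)

noncomputable def cL (A B t : ℝ) : ℝ := Real.cos (A*t+B)
noncomputable def cL1 (A B t : ℝ) : ℝ := -(A * Real.sin (A*t+B))
noncomputable def cL2 (A B t : ℝ) : ℝ := -(A^2 * Real.cos (A*t+B))
noncomputable def cL3 (A B t : ℝ) : ℝ := A^3 * Real.sin (A*t+B)

lemma hdLin (A B t : ℝ) : HasDerivAt (fun s => A*s+B) A t := by
  simpa using ((hasDerivAt_id t).const_mul A).add_const B

lemma hd_cos (A B t : ℝ) : HasDerivAt (fun s => Real.cos (A*s+B)) (-Real.sin (A*t+B) * A) t :=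
  (hdLin A B t).cos

lemma hd_sin (A B t : ℝ) : HasDerivAt (fun s => Real.sin (A*s+B)) (Real.cos (A*t+B) * A) t :=
  (hdLin A B t).sin

lemma hd_cL (A B t : ℝ) : HasDerivAt (cL A B) (cL1 A B t) t := by
  have e : cL1 A B t = -Real.sin (A*t+B) * A := by unfold cL1; ring
  rw [e]; exact hd_cos A B t

lemma hd_cL1 (A B t : ℝ) : HasDerivAt (cL1 A B) (cL2 A B t) t := by
  have e : cL2 A B t = -(A * (Real.cos (A*t+B) * A)) := by unfold cL2; ring
  rw [e]; exact ((hd_sin A B t).const_mul A).neg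

lemma hd_cL2 (A B t : ℝ) : HasDerivAt (cL2 A B) (cL3 A B t) t := by
  have e : cL3 A B t = -(A^2 * (-Real.sin (A*t+B) * A)) := by unfold cL3; ring
  rw [e]; exact ((hd_cos A B t).const_mul (A^2)).neg

lemma pd1_sep (f f' g h : ℝ → ℝ) (hf : ∀ t, HasDerivAt f (f' t) t) :
    pd1 (fun x : ℝ × ℝ × ℝ => ((f x.1 * g x.2.1 * h x.2.2 : ℝ) : ℂ)) =
      fun x => ((f' x.1 * g x.2.1 * h x.2.2 : ℝ) : ℂ) := by
  funext x
  exact ((((hf x.1).mul_const (g x.2.1)).mul_const (h x.2.2)).ofReal_comp).deriv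

lemma pd2_sep (f g g' h : ℝ → ℝ) (hg : ∀ t, HasDerivAt g (g' t) t) :
    pd2 (fun x : ℝ × ℝ × ℝ => ((f x.1 * g x.2.1 * h x.2.2 : ℝ) : ℂ)) =
      fun x => ((f x.1 * g' x.2.1 * h x.2.2 : ℝ) : ℂ) := by
  funext x
  exact ((((hg x.2.1).const_mul (f x.1)).mul_const (h x.2.2)).ofReal_comp).deriv

lemma pd3_sep (f g h h' : ℝ → ℝ) (hh : ∀ t, HasDerivAt h (h' t) t) :
    pd3 (fun x : ℝ × ℝ × ℝ => ((f x.1 * g x.2.1 * h x.2.2 : ℝ) : ℂ)) =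
      fun x => ((f x.1 * g x.2.1 * h' x.2.2 : ℝ) : ℂ) := by
  funext x
  exact (((hh x.2.2).const_mul (f x.1 * g x.2.1)).ofReal_comp).deriv

lemma pd1_pt (K : ℂ) (f f' g h : ℝ → ℝ) (hf : ∀ t, HasDerivAt f (f' t) t) (x : ℝ × ℝ × ℝ) :
    pd1 (fun y : ℝ × ℝ × ℝ => K * ((f y.1 * g y.2.1 * h y.2.2 : ℝ) : ℂ)) x =
      K * ((f' x.1 * g x.2.1 * h x.2.2 : ℝ) : ℂ) :=
  (((((hf x.1).mul_const (g x.2.1)).mul_const (h x.2.2)).ofReal_comp).const_mul K).deriv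

lemma pd2_pt (K : ℂ) (f g g' h : ℝ → ℝ) (hg : ∀ t, HasDerivAt g (g' t) t) (x : ℝ × ℝ × ℝ) :
    pd2 (fun y : ℝ × ℝ × ℝ => K * ((f y.1 * g y.2.1 * h y.2.2 : ℝ) : ℂ)) x =
      K * ((f x.1 * g' x.2.1 * h x.2.2 : ℝ) : ℂ) :=
  (((((hg x.2.1).const_mul (f x.1)).mul_const (h x.2.2)).ofReal_comp).const_mul K).deriv

lemma pd3_pt (K : ℂ) (f g h h' : ℝ → ℝ) (hh : ∀ t, HasDerivAt h (h' t) t) (x : ℝ × ℝ × ℝ) :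
    pd3 (fun y : ℝ × ℝ × ℝ => K * ((f y.1 * g y.2.1 * h y.2.2 : ℝ) : ℂ)) x =
      K * ((f x.1 * g x.2.1 * h' x.2.2 : ℝ) : ℂ) :=
  ((((hh x.2.2).const_mul (f x.1 * g x.2.1)).ofReal_comp).const_mul K).deriv

lemma pd2_pt2 (K₁ K₂ : ℂ) (f g g' h p q q' s : ℝ → ℝ)
    (hg : ∀ t, HasDerivAt g (g' t) t) (hq : ∀ t, HasDerivAt q (q' t) t) (x : ℝ × ℝ × ℝ) :
    pd2 (fun y : ℝ × ℝ × ℝ => K₁ * ((f y.1 * g y.2.1 * h y.2.2 : ℝ) : ℂ)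
        + K₂ * ((p y.1 * q y.2.1 * s y.2.2 : ℝ) : ℂ)) x =
      K₁ * ((f x.1 * g' x.2.1 * h x.2.2 : ℝ) : ℂ) + K₂ * ((p x.1 * q' x.2.1 * s x.2.2 : ℝ) : ℂ) :=
  (((((hg x.2.1).const_mul (f x.1)).mul_const (h x.2.2)).ofReal_comp.const_mul K₁).add
    ((((hq x.2.1).const_mul (p x.1)).mul_const (s x.2.2)).ofReal_comp.const_mul K₂)).deriv

lemma pd3_pt2 (K₁ K₂ : ℂ) (f g h h' p q s s' : ℝ → ℝ)
    (hh : ∀ t, HasDerivAt h (h' t) t) (hs : ∀ t, HasDerivAt s (s' t) t) (x : ℝ × ℝ × ℝ) :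
    pd3 (fun y : ℝ × ℝ × ℝ => K₁ * ((f y.1 * g y.2.1 * h y.2.2 : ℝ) : ℂ)
        + K₂ * ((p y.1 * q y.2.1 * s y.2.2 : ℝ) : ℂ)) x =
      K₁ * ((f x.1 * g x.2.1 * h' x.2.2 : ℝ) : ℂ) + K₂ * ((p x.1 * q x.2.1 * s' x.2.2 : ℝ) : ℂ) :=
  ((((hh x.2.2).const_mul (f x.1 * g x.2.1)).ofReal_comp.const_mul K₁).add
    (((hs x.2.2).const_mul (p x.1 * q x.2.1)).ofReal_comp.const_mul K₂)).deriv

/-- `curl H = -iωε E` under the resonance condition on ω. -/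
theorem stmt1 (l₁ l₂ l₃p l₃m ε μ ω : ℝ)
    (hl₁ : 0 < l₁) (hl₂ : 0 < l₂) (hl₃p : 0 < l₃p) (hl₃m : 0 < l₃m)
    (hε : 0 < ε) (hμ : 0 < μ) (hω : 0 < ω)
    (k₁ k₂ k₃ : ℕ)
    (hω2 : ω ^ 2 = 4 * π ^ 2 / (ε * μ) * ((k₁ : ℝ) ^ 2 / l₁ ^ 2 + (k₂ : ℝ) ^ 2 / l₂ ^ 2
        + (k₃ : ℝ) ^ 2 / (4 * (l₃p + l₃m) ^ 2)))
    (w : ℝ × ℝ × ℝ → ℂ)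
    (hw : w = fun x => ((Real.cos (2 * π * (k₁ : ℝ) * x.1 / l₁) *
        Real.cos (2 * π * (k₂ : ℝ) * x.2.1 / l₂) *
        Real.cos (π * (k₃ : ℝ) * (x.2.2 + l₃m) / (l₃p + l₃m)) : ℝ) : ℂ))
    (E H : ℝ × ℝ × ℝ → ℂ × ℂ × ℂ)
    (hE : E = fun x => (0, pd3 w x, -(pd2 w x)))
    (hH : H = fun x => (Complex.I * (ω : ℂ) * (μ : ℂ))⁻¹ •
        ((-(pd2 (pd2 w) x) - pd3 (pd3 w) x, pd1 (pd2 w) x, pd1 (pd3 w) x) : ℂ × ℂ × ℂ)) :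
    ∀ x : ℝ × ℝ × ℝ, curl3 H x = (-(Complex.I * (ω : ℂ) * (ε : ℂ))) • E x := by
  intro x
  set a := 2 * π * (k₁ : ℝ) / l₁ with ha
  set b := 2 * π * (k₂ : ℝ) / l₂ with hb
  set c := π * (k₃ : ℝ) / (l₃p + l₃m) with hc
  set r := c * l₃m with hr
  have hl3 : l₃p + l₃m ≠ 0 := by positivity
  have hw' : w = fun x : ℝ × ℝ × ℝ =>
      ((cL a 0 x.1 * cL b 0 x.2.1 * cL c r x.2.2 : ℝ) : ℂ) := by
    rw [hw]; funext y
    have e1 : 2 * π * (k₁ : ℝ) * y.1 / l₁ = a * y.1 + 0 := by rw [ha]; ring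
    have e2 : 2 * π * (k₂ : ℝ) * y.2.1 / l₂ = b * y.2.1 + 0 := by rw [hb]; ring
    have e3 : π * (k₃ : ℝ) * (y.2.2 + l₃m) / (l₃p + l₃m) = c * y.2.2 + r := by
      rw [hr, hc]; field_simp
    simp only [cL, e1, e2, e3]
  have h2 : pd2 w = fun x : ℝ × ℝ × ℝ =>
      ((cL a 0 x.1 * cL1 b 0 x.2.1 * cL c r x.2.2 : ℝ) : ℂ) := by
    rw [hw']; exact pd2_sep _ _ (cL1 b 0) _ (hd_cL b 0)
  have h3 : pd3 w = fun x : ℝ × ℝ × ℝ =>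
      ((cL a 0 x.1 * cL b 0 x.2.1 * cL1 c r x.2.2 : ℝ) : ℂ) := by
    rw [hw']; exact pd3_sep _ _ _ (cL1 c r) (hd_cL c r)
  have h22 : pd2 (pd2 w) = fun x : ℝ × ℝ × ℝ =>
      ((cL a 0 x.1 * cL2 b 0 x.2.1 * cL c r x.2.2 : ℝ) : ℂ) := by
    rw [h2]; exact pd2_sep _ _ (cL2 b 0) _ (hd_cL1 b 0)
  have h33 : pd3 (pd3 w) = fun x : ℝ × ℝ × ℝ =>
      ((cL a 0 x.1 * cL b 0 x.2.1 * cL2 c r x.2.2 : ℝ) : ℂ) := by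
    rw [h3]; exact pd3_sep _ _ _ (cL2 c r) (hd_cL1 c r)
  have h12 : pd1 (pd2 w) = fun x : ℝ × ℝ × ℝ =>
      ((cL1 a 0 x.1 * cL1 b 0 x.2.1 * cL c r x.2.2 : ℝ) : ℂ) := by
    rw [h2]; exact pd1_sep _ (cL1 a 0) _ _ (hd_cL a 0)
  have h13 : pd1 (pd3 w) = fun x : ℝ × ℝ × ℝ =>
      ((cL1 a 0 x.1 * cL b 0 x.2.1 * cL1 c r x.2.2 : ℝ) : ℂ) := by
    rw [h3]; exact pd1_sep _ (cL1 a 0) _ _ (hd_cL a 0)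
  set K : ℂ := (Complex.I * (ω : ℂ) * (μ : ℂ))⁻¹ with hK
  have hH' : H = fun x : ℝ × ℝ × ℝ =>
      ((-K) * ((cL a 0 x.1 * cL2 b 0 x.2.1 * cL c r x.2.2 : ℝ) : ℂ)
        + (-K) * ((cL a 0 x.1 * cL b 0 x.2.1 * cL2 c r x.2.2 : ℝ) : ℂ),
       K * ((cL1 a 0 x.1 * cL1 b 0 x.2.1 * cL c r x.2.2 : ℝ) : ℂ),
       K * ((cL1 a 0 x.1 * cL b 0 x.2.1 * cL1 c r x.2.2 : ℝ) : ℂ)) := by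
    rw [hH, h22, h33, h12, h13]; funext y
    simp only [Prod.smul_mk, smul_eq_mul, Prod.mk.injEq]
    exact ⟨by ring, trivial⟩
  have hE' : E = fun x : ℝ × ℝ × ℝ =>
      ((0 : ℂ), ((cL a 0 x.1 * cL b 0 x.2.1 * cL1 c r x.2.2 : ℝ) : ℂ),
       -((cL a 0 x.1 * cL1 b 0 x.2.1 * cL c r x.2.2 : ℝ) : ℂ)) := by
    rw [hE, h2, h3]
  -- key algebraic facts
  have hωc : (ω : ℂ) ≠ 0 := by exact_mod_cast hω.ne'
  have hμc : (μ : ℂ) ≠ 0 := by exact_mod_cast hμ.ne'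
  have hne : Complex.I * (ω : ℂ) * (μ : ℂ) ≠ 0 :=
    mul_ne_zero (mul_ne_zero Complex.I_ne_zero hωc) hμc
  have keyR : a ^ 2 + b ^ 2 + c ^ 2 = ε * μ * ω ^ 2 := by
    rw [ha, hb, hc, hω2]; field_simp; ring
  have key : (a : ℂ) ^ 2 + (b : ℂ) ^ 2 + (c : ℂ) ^ 2 = (ε : ℂ) * (μ : ℂ) * (ω : ℂ) ^ 2 := by
    exact_mod_cast congrArg (Complex.ofReal) keyR
  have hKe : (Complex.I * (ω : ℂ) * (μ : ℂ)) * -(Complex.I * (ω : ℂ) * (ε : ℂ))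
      = (ε : ℂ) * (μ : ℂ) * (ω : ℂ) ^ 2 := by
    linear_combination (-((ω : ℂ) ^ 2 * (μ : ℂ) * (ε : ℂ))) * Complex.I_mul_I
  have hKv : K * ((ε : ℂ) * (μ : ℂ) * (ω : ℂ) ^ 2) = -(Complex.I * (ω : ℂ) * (ε : ℂ)) := by
    rw [hK, ← hKe, inv_mul_cancel_left₀ hne]
  -- compute the curl componentwise
  show curl3 H x = _
  rw [curl3, hH', hE']
  simp only
  rw [pd2_pt K (cL1 a 0) _ (cL1 b 0) _ (hd_cL b 0) x,
      pd3_pt K (cL1 a 0) _ _ (cL1 c r) (hd_cL c r) x,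
      pd3_pt2 (-K) (-K) _ _ _ (cL1 c r) _ _ _ (cL3 c r) (hd_cL c r) (hd_cL2 c r) x,
      pd1_pt K (cL1 a 0) (cL2 a 0) _ _ (hd_cL1 a 0) x,
      pd1_pt K (cL1 a 0) (cL2 a 0) _ _ (hd_cL1 a 0) x,
      pd2_pt2 (-K) (-K) (cL a 0) (cL2 b 0) (cL3 b 0) (cL c r) (cL a 0) (cL b 0) (cL1 b 0)
        (cL2 c r) (hd_cL2 b 0) (hd_cL b 0) x]
  simp only [Prod.smul_mk, smul_eq_mul, Prod.mk.injEq, cL, cL1, cL2, cL3, add_zero]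
  push_cast
  refine ⟨by ring, ?_, ?_⟩
  · linear_combination
      (-(K * (c : ℂ) * Complex.cos ((a:ℂ) * (x.1:ℂ)) * Complex.cos ((b:ℂ) * (x.2.1:ℂ))
        * Complex.sin ((c:ℂ) * (x.2.2:ℂ) + (r:ℂ)))) * key
      + (-((c : ℂ) * Complex.cos ((a:ℂ) * (x.1:ℂ)) * Complex.cos ((b:ℂ) * (x.2.1:ℂ))
        * Complex.sin ((c:ℂ) * (x.2.2:ℂ) + (r:ℂ)))) * hKv
  · linear_combination
      (K * (b : ℂ) * Complex.cos ((a:ℂ) * (x.1:ℂ)) * Complex.sin ((b:ℂ) * (x.2.1:ℂ))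
        * Complex.cos ((c:ℂ) * (x.2.2:ℂ) + (r:ℂ))) * key
      + ((b : ℂ) * Complex.cos ((a:ℂ) * (x.1:ℂ)) * Complex.sin ((b:ℂ) * (x.2.1:ℂ))
        * Complex.cos ((c:ℂ) * (x.2.2:ℂ) + (r:ℂ))) * hKv
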